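/- Let B₁, B₂ ∈ SL(2, ℝ) and ℓ₁, ℓ₂ > 0, and define M^E(ℓ, B) = B·T(E, ℓ) where T is the free monodromy matrix. If the commutator [M^{w²}(ℓ₁, B₁), M^{w²}(ℓ₂, B₂)] = 0 for all w > 0, then either (ℓ₁ = ℓ₂ and B₁ = ±B₂) or (B₁, B₂ ∈ {I, −I}). -/

import Mathlib

open Real Matrix

noncomputable def freeMonodromy (E ℓ : ℝ) : Matrix (Fin 2) (Fin 2) ℝ :=
  !![Real.cos (Real.sqrt E * ℓ), Real.sin (Real.sqrt E * ℓ) / Real.sqrt E;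
     -(Real.sqrt E * Real.sin (Real.sqrt E * ℓ)), Real.cos (Real.sqrt E * ℓ)]

noncomputable def transferM (E ℓ : ℝ) (B : Matrix (Fin 2) (Fin 2) ℝ) :
    Matrix (Fin 2) (Fin 2) ℝ := B * freeMonodromy E ℓ

open Filter Topology

section Helpers


section helpers
lemma aux_pow_exp (c : ℝ) (hc : 0 < c) (n : ℕ) :
    Tendsto (fun t : ℝ => t ^ n * Real.exp (-(c * t))) atTop (𝓝 0) := by
  have h := (tendsto_pow_mul_exp_neg_atTop_nhds_zero n).comp
    (tendsto_id.const_mul_atTop hc)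
  have h2 := h.const_mul ((c : ℝ) ^ n)⁻¹
  rw [mul_zero] at h2
  refine h2.congr' ?_
  filter_upwards with t
  simp only [Function.comp]
  field_simp
  simp only [id_eq, mul_pow]

lemma aux_exp_poly (c : ℝ) (hc : 0 < c) (c0 c1 c2 c3 c4 : ℝ) :
    Tendsto (fun t : ℝ => Real.exp (-(c * t)) * (c0 + c1*t + c2*t^2 + c3*t^3 + c4*t^4))
      atTop (𝓝 0) := by
  have h := ((((aux_pow_exp c hc 0).const_mul c0).add ((aux_pow_exp c hc 1).const_mul c1)).add
    (((aux_pow_exp c hc 2).const_mul c2).add ((aux_pow_exp c hc 3).const_mul c3))).add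
    ((aux_pow_exp c hc 4).const_mul c4)
  norm_num at h
  refine h.congr fun t => by ring

lemma top_coeff (p : ℝ → ℝ) (c : ℝ) (n : ℕ) (hn : n ≠ 0)
    (hp : Tendsto p atTop (𝓝 0))
    (hq : Tendsto (fun t => p t / t ^ n) atTop (𝓝 c)) : c = 0 :=
  tendsto_nhds_unique hq (hp.div_atTop (tendsto_pow_atTop hn))


lemma poly_limit_zero (c0 c1 c2 c3 c4 : ℝ)
    (h : Tendsto (fun t : ℝ => c0 + c1*t + c2*t^2 + c3*t^3 + c4*t^4) atTop (𝓝 0)) :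
    c0 = 0 ∧ c1 = 0 ∧ c2 = 0 ∧ c3 = 0 ∧ c4 = 0 := by
  have inv0 : Tendsto (fun t : ℝ => t⁻¹) atTop (𝓝 0) := tendsto_inv_atTop_zero
  have hc4 : c4 = 0 := by
    refine top_coeff _ c4 4 (by norm_num) h ?_
    have base : Tendsto (fun t : ℝ => c0*(t⁻¹)^4 + c1*(t⁻¹)^3 + c2*(t⁻¹)^2 + c3*t⁻¹ + c4)
        atTop (𝓝 c4) := by
      have H := ((((inv0.pow 4).const_mul c0).add ((inv0.pow 3).const_mul c1)).add
        (((inv0.pow 2).const_mul c2).add (inv0.const_mul c3))).add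
        (tendsto_const_nhds (x := c4))
      simpa using H.congr fun t => by ring
    refine base.congr' ?_
    filter_upwards [eventually_gt_atTop (0:ℝ)] with t ht
    have : t ≠ 0 := ht.ne'
    field_simp
  subst hc4
  have h' : Tendsto (fun t : ℝ => c0 + c1*t + c2*t^2 + c3*t^3) atTop (𝓝 0) :=
    h.congr fun t => by ring
  have hc3 : c3 = 0 := by
    refine top_coeff _ c3 3 (by norm_num) h' ?_
    have base : Tendsto (fun t : ℝ => c0*(t⁻¹)^3 + c1*(t⁻¹)^2 + c2*t⁻¹ + c3)
        atTop (𝓝 c3) := by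
      have H := (((inv0.pow 3).const_mul c0).add (((inv0.pow 2).const_mul c1).add
        (inv0.const_mul c2))).add (tendsto_const_nhds (x := c3))
      simpa using H.congr fun t => by ring
    refine base.congr' ?_
    filter_upwards [eventually_gt_atTop (0:ℝ)] with t ht
    have : t ≠ 0 := ht.ne'
    field_simp
  subst hc3
  have h'' : Tendsto (fun t : ℝ => c0 + c1*t + c2*t^2) atTop (𝓝 0) :=
    h'.congr fun t => by ring
  have hc2 : c2 = 0 := by
    refine top_coeff _ c2 2 (by norm_num) h'' ?_
    have base : Tendsto (fun t : ℝ => c0*(t⁻¹)^2 + c1*t⁻¹ + c2) atTop (𝓝 c2) := by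
      have H := (((inv0.pow 2).const_mul c0).add (inv0.const_mul c1)).add
        (tendsto_const_nhds (x := c2))
      simpa using H.congr fun t => by ring
    refine base.congr' ?_
    filter_upwards [eventually_gt_atTop (0:ℝ)] with t ht
    have : t ≠ 0 := ht.ne'
    field_simp
  subst hc2
  have h3 : Tendsto (fun t : ℝ => c0 + c1*t) atTop (𝓝 0) := h''.congr fun t => by ring
  have hc1 : c1 = 0 := by
    refine top_coeff _ c1 1 (by norm_num) h3 ?_
    have base : Tendsto (fun t : ℝ => c0*t⁻¹ + c1) atTop (𝓝 c1) := by
      have H := (inv0.const_mul c0).add (tendsto_const_nhds (x := c1))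
      simpa using H
    refine base.congr' ?_
    filter_upwards [eventually_gt_atTop (0:ℝ)] with t ht
    have : t ≠ 0 := ht.ne'
    field_simp
  subst hc1
  have h4 : Tendsto (fun t : ℝ => c0) atTop (𝓝 0) := h3.congr fun t => by ring
  exact ⟨tendsto_nhds_unique tendsto_const_nhds h4, rfl, rfl, rfl, rfl⟩

end helpers

lemma scalar_master (ℓ₁ ℓ₂ u v₁ v₂ w₁ w₂ x y z : ℝ) (h₁ : 0 < ℓ₁) (h₂ : 0 < ℓ₂)
    (hF : ∀ t : ℝ,
      -t^2 * Real.cosh (ℓ₁*t) * Real.cosh (ℓ₂*t) * u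
      - t * Real.cosh (ℓ₁*t) * Real.sinh (ℓ₂*t) * v₂
      + t^3 * Real.cosh (ℓ₁*t) * Real.sinh (ℓ₂*t) * w₂
      - t * Real.sinh (ℓ₁*t) * Real.cosh (ℓ₂*t) * v₁
      + t^3 * Real.sinh (ℓ₁*t) * Real.cosh (ℓ₂*t) * w₁
      - Real.sinh (ℓ₁*t) * Real.sinh (ℓ₂*t) * x
      + t^2 * Real.sinh (ℓ₁*t) * Real.sinh (ℓ₂*t) * y
      - t^4 * Real.sinh (ℓ₁*t) * Real.sinh (ℓ₂*t) * z = 0) :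
    x = 0 ∧ v₁ + v₂ = 0 ∧ y = u ∧ w₁ + w₂ = 0 ∧ z = 0 ∧
    ∀ t : ℝ, -t^2*u*Real.cosh ((ℓ₁-ℓ₂)*t) + t*v₂*Real.sinh ((ℓ₁-ℓ₂)*t)
      - t^3*w₂*Real.sinh ((ℓ₁-ℓ₂)*t) = 0 := by
  have hid : ∀ t : ℝ,
      (-x) + (-(v₁+v₂))*t + (y-u)*t^2 + (w₁+w₂)*t^3 + (-z)*t^4
      = -( Real.exp (-(2*ℓ₁*t)) * (x + (v₁-v₂)*t + (-u-y)*t^2 + (w₂-w₁)*t^3 + z*t^4)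
         + Real.exp (-(2*ℓ₂*t)) * (x + (v₂-v₁)*t + (-u-y)*t^2 + (w₁-w₂)*t^3 + z*t^4)
         + Real.exp (-(2*(ℓ₁+ℓ₂)*t)) * ((-x) + (v₁+v₂)*t + (y-u)*t^2 + (-(w₁+w₂))*t^3 + (-z)*t^4)) := by
    intro t
    have e1 : Real.exp (-(2*ℓ₁*t)) = (Real.exp (ℓ₁*t))⁻¹ * (Real.exp (ℓ₁*t))⁻¹ := by
      rw [show -(2*ℓ₁*t) = -(ℓ₁*t) + -(ℓ₁*t) by ring, Real.exp_add, Real.exp_neg]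
    have e2 : Real.exp (-(2*ℓ₂*t)) = (Real.exp (ℓ₂*t))⁻¹ * (Real.exp (ℓ₂*t))⁻¹ := by
      rw [show -(2*ℓ₂*t) = -(ℓ₂*t) + -(ℓ₂*t) by ring, Real.exp_add, Real.exp_neg]
    have e3 : Real.exp (-(2*(ℓ₁+ℓ₂)*t)) = (Real.exp (ℓ₁*t))⁻¹ * (Real.exp (ℓ₁*t))⁻¹
        * ((Real.exp (ℓ₂*t))⁻¹ * (Real.exp (ℓ₂*t))⁻¹) := by
      rw [show -(2*(ℓ₁+ℓ₂)*t) = (-(ℓ₁*t) + -(ℓ₁*t)) + (-(ℓ₂*t) + -(ℓ₂*t)) by ring,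
        Real.exp_add, Real.exp_add, Real.exp_add, Real.exp_neg, Real.exp_neg]
    have e4 : Real.exp (-((ℓ₁+ℓ₂)*t)) = (Real.exp (ℓ₁*t))⁻¹ * (Real.exp (ℓ₂*t))⁻¹ := by
      rw [show -((ℓ₁+ℓ₂)*t) = -(ℓ₁*t) + -(ℓ₂*t) by ring, Real.exp_add, Real.exp_neg, Real.exp_neg]
    have key : (-x) + (-(v₁+v₂))*t + (y-u)*t^2 + (w₁+w₂)*t^3 + (-z)*t^4
      + ( Real.exp (-(2*ℓ₁*t)) * (x + (v₁-v₂)*t + (-u-y)*t^2 + (w₂-w₁)*t^3 + z*t^4)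
        + Real.exp (-(2*ℓ₂*t)) * (x + (v₂-v₁)*t + (-u-y)*t^2 + (w₁-w₂)*t^3 + z*t^4)
        + Real.exp (-(2*(ℓ₁+ℓ₂)*t)) * ((-x) + (v₁+v₂)*t + (y-u)*t^2 + (-(w₁+w₂))*t^3 + (-z)*t^4))
      = 4 * ( -t^2 * Real.cosh (ℓ₁*t) * Real.cosh (ℓ₂*t) * u
      - t * Real.cosh (ℓ₁*t) * Real.sinh (ℓ₂*t) * v₂
      + t^3 * Real.cosh (ℓ₁*t) * Real.sinh (ℓ₂*t) * w₂
      - t * Real.sinh (ℓ₁*t) * Real.cosh (ℓ₂*t) * v₁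
      + t^3 * Real.sinh (ℓ₁*t) * Real.cosh (ℓ₂*t) * w₁
      - Real.sinh (ℓ₁*t) * Real.sinh (ℓ₂*t) * x
      + t^2 * Real.sinh (ℓ₁*t) * Real.sinh (ℓ₂*t) * y
      - t^4 * Real.sinh (ℓ₁*t) * Real.sinh (ℓ₂*t) * z) * Real.exp (-((ℓ₁+ℓ₂)*t)) := by
      rw [Real.cosh_eq, Real.sinh_eq, Real.cosh_eq, Real.sinh_eq, e1, e2, e3, e4,
        Real.exp_neg, Real.exp_neg]
      have p1 := Real.exp_ne_zero (ℓ₁*t)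
      have p2 := Real.exp_ne_zero (ℓ₂*t)
      field_simp
      ring
    rw [hF t] at key
    linarith [key]
  have hP : Tendsto (fun t : ℝ =>
      (-x) + (-(v₁+v₂))*t + (y-u)*t^2 + (w₁+w₂)*t^3 + (-z)*t^4) atTop (𝓝 0) := by
    have hJ := ((aux_exp_poly (2*ℓ₁) (by linarith) x (v₁-v₂) (-u-y) (w₂-w₁) z).add
      (aux_exp_poly (2*ℓ₂) (by linarith) x (v₂-v₁) (-u-y) (w₁-w₂) z)).add
      (aux_exp_poly (2*(ℓ₁+ℓ₂)) (by linarith) (-x) (v₁+v₂) (y-u) (-(w₁+w₂)) (-z))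
    rw [show ((0:ℝ)+0)+0 = 0 by norm_num] at hJ
    have hJ2 := hJ.neg
    rw [neg_zero] at hJ2
    exact hJ2.congr fun t => (hid t).symm
  obtain ⟨hx, hv, hy, hw, hz⟩ := poly_limit_zero _ _ _ _ _ hP
  have hx' : x = 0 := by linarith
  have hv' : v₁ + v₂ = 0 := by linarith
  have hy' : y = u := by linarith
  have hz' : z = 0 := by linarith
  refine ⟨hx', hv', hy', hw, hz', ?_⟩
  intro t
  rw [sub_mul, Real.cosh_sub, Real.sinh_sub]
  linear_combination hF t - t^2*Real.sinh (ℓ₁*t)*Real.sinh (ℓ₂*t)*hy'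
    + t*Real.sinh (ℓ₁*t)*Real.cosh (ℓ₂*t)*hv' - t^3*Real.sinh (ℓ₁*t)*Real.cosh (ℓ₂*t)*hw
    + Real.sinh (ℓ₁*t)*Real.sinh (ℓ₂*t)*hx' + t^4*Real.sinh (ℓ₁*t)*Real.sinh (ℓ₂*t)*hz'

lemma stage2_pos (β u v w : ℝ) (hβ : 0 < β)
    (h : ∀ t : ℝ, -t^2*u*Real.cosh (β*t) + t*v*Real.sinh (β*t) - t^3*w*Real.sinh (β*t) = 0) :
    u = 0 ∧ v = 0 ∧ w = 0 := by
  have hid : ∀ t : ℝ, (0:ℝ) + v*t + (-u)*t^2 + (-w)*t^3 + (0:ℝ)*t^4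
      = -(Real.exp (-(2*β*t)) * (0 + (-v)*t + (-u)*t^2 + w*t^3 + 0*t^4)) := by
    intro t
    have e1 : Real.exp (-(2*β*t)) = (Real.exp (β*t))⁻¹ * (Real.exp (β*t))⁻¹ := by
      rw [show -(2*β*t) = -(β*t) + -(β*t) by ring, Real.exp_add, Real.exp_neg]
    have key : (0:ℝ) + v*t + (-u)*t^2 + (-w)*t^3 + (0:ℝ)*t^4
        + Real.exp (-(2*β*t)) * (0 + (-v)*t + (-u)*t^2 + w*t^3 + 0*t^4)
        = 2 * (-t^2*u*Real.cosh (β*t) + t*v*Real.sinh (β*t) - t^3*w*Real.sinh (β*t))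
          * (Real.exp (β*t))⁻¹ := by
      rw [Real.cosh_eq, Real.sinh_eq, e1, Real.exp_neg]
      have p1 := Real.exp_ne_zero (β*t)
      field_simp
      ring
    rw [h t] at key
    linarith [key]
  have hP : Tendsto (fun t : ℝ => (0:ℝ) + v*t + (-u)*t^2 + (-w)*t^3 + (0:ℝ)*t^4)
      atTop (𝓝 0) := by
    have hJ := (aux_exp_poly (2*β) (by linarith) 0 (-v) (-u) w 0).neg
    rw [neg_zero] at hJ
    exact hJ.congr fun t => (hid t).symm
  obtain ⟨-, hv, hu, hw, -⟩ := poly_limit_zero _ _ _ _ _ hP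
  exact ⟨by linarith, hv, by linarith⟩

lemma stage2 (β u v w : ℝ) (hβ : β ≠ 0)
    (h : ∀ t : ℝ, -t^2*u*Real.cosh (β*t) + t*v*Real.sinh (β*t) - t^3*w*Real.sinh (β*t) = 0) :
    u = 0 ∧ v = 0 ∧ w = 0 := by
  rcases hβ.lt_or_gt with hb | hb
  · have h' : ∀ t : ℝ, -t^2*u*Real.cosh ((-β)*t) + t*(-v)*Real.sinh ((-β)*t)
        - t^3*(-w)*Real.sinh ((-β)*t) = 0 := by
      intro t
      rw [neg_mul β t, Real.cosh_neg, Real.sinh_neg]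
      linear_combination h t
    obtain ⟨hu, hv, hw⟩ := stage2_pos (-β) u (-v) (-w) (by linarith) h'
    exact ⟨hu, by linarith, by linarith⟩
  · exact stage2_pos β u v w hb h


lemma analytic_transfer (ℓ₁ ℓ₂ u v₁ v₂ w₁ w₂ x y z : ℝ)
    (hw : ∀ w : ℝ, 0 < w →
      w^2 * Real.cos (ℓ₁*w) * Real.cos (ℓ₂*w) * u
      + w * Real.cos (ℓ₁*w) * Real.sin (ℓ₂*w) * v₂
      + w^3 * Real.cos (ℓ₁*w) * Real.sin (ℓ₂*w) * w₂
      + w * Real.sin (ℓ₁*w) * Real.cos (ℓ₂*w) * v₁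
      + w^3 * Real.sin (ℓ₁*w) * Real.cos (ℓ₂*w) * w₁
      + Real.sin (ℓ₁*w) * Real.sin (ℓ₂*w) * x
      + w^2 * Real.sin (ℓ₁*w) * Real.sin (ℓ₂*w) * y
      + w^4 * Real.sin (ℓ₁*w) * Real.sin (ℓ₂*w) * z = 0) :
    ∀ t : ℝ,
      -t^2 * Real.cosh (ℓ₁*t) * Real.cosh (ℓ₂*t) * u
      - t * Real.cosh (ℓ₁*t) * Real.sinh (ℓ₂*t) * v₂
      + t^3 * Real.cosh (ℓ₁*t) * Real.sinh (ℓ₂*t) * w₂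
      - t * Real.sinh (ℓ₁*t) * Real.cosh (ℓ₂*t) * v₁
      + t^3 * Real.sinh (ℓ₁*t) * Real.cosh (ℓ₂*t) * w₁
      - Real.sinh (ℓ₁*t) * Real.sinh (ℓ₂*t) * x
      + t^2 * Real.sinh (ℓ₁*t) * Real.sinh (ℓ₂*t) * y
      - t^4 * Real.sinh (ℓ₁*t) * Real.sinh (ℓ₂*t) * z = 0 := by
  set g : ℂ → ℂ := fun s =>
    s^2 * Complex.cos (ℓ₁*s) * Complex.cos (ℓ₂*s) * (u:ℂ)
    + s * Complex.cos (ℓ₁*s) * Complex.sin (ℓ₂*s) * (v₂:ℂ)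
    + s^3 * Complex.cos (ℓ₁*s) * Complex.sin (ℓ₂*s) * (w₂:ℂ)
    + s * Complex.sin (ℓ₁*s) * Complex.cos (ℓ₂*s) * (v₁:ℂ)
    + s^3 * Complex.sin (ℓ₁*s) * Complex.cos (ℓ₂*s) * (w₁:ℂ)
    + Complex.sin (ℓ₁*s) * Complex.sin (ℓ₂*s) * (x:ℂ)
    + s^2 * Complex.sin (ℓ₁*s) * Complex.sin (ℓ₂*s) * (y:ℂ)
    + s^4 * Complex.sin (ℓ₁*s) * Complex.sin (ℓ₂*s) * (z:ℂ) with hg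
  have hdiff : Differentiable ℂ g := by
    fun_prop
  have hg0 : ∀ w : ℝ, 0 < w → g (w : ℂ) = 0 := by
    intro w hw0
    have : g (w:ℂ) = ((w^2 * Real.cos (ℓ₁*w) * Real.cos (ℓ₂*w) * u
      + w * Real.cos (ℓ₁*w) * Real.sin (ℓ₂*w) * v₂
      + w^3 * Real.cos (ℓ₁*w) * Real.sin (ℓ₂*w) * w₂
      + w * Real.sin (ℓ₁*w) * Real.cos (ℓ₂*w) * v₁
      + w^3 * Real.sin (ℓ₁*w) * Real.cos (ℓ₂*w) * w₁
      + Real.sin (ℓ₁*w) * Real.sin (ℓ₂*w) * x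
      + w^2 * Real.sin (ℓ₁*w) * Real.sin (ℓ₂*w) * y
      + w^4 * Real.sin (ℓ₁*w) * Real.sin (ℓ₂*w) * z : ℝ) : ℂ) := by
      simp only [hg]
      push_cast
      ring
    rw [this, hw w hw0]
    norm_num
  have hfreq : ∃ᶠ s in nhdsWithin (1:ℂ) {(1:ℂ)}ᶜ, g s = 0 := by
    have htend : Tendsto (fun n : ℕ => ((1 + ((n:ℝ)+1)⁻¹ : ℝ) : ℂ)) atTop
        (nhdsWithin (1:ℂ) {(1:ℂ)}ᶜ) := by
      rw [tendsto_nhdsWithin_iff]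
      constructor
      · have hr : Tendsto (fun n : ℕ => (1 + ((n:ℝ)+1)⁻¹ : ℝ)) atTop (𝓝 1) := by
          have : Tendsto (fun n : ℕ => 1 / ((n:ℝ) + 1)) atTop (𝓝 0) :=
            tendsto_one_div_add_atTop_nhds_zero_nat
          have h2 := this.const_add (1:ℝ)
          rw [add_zero] at h2
          exact h2.congr fun n => by rw [one_div]
        exact (Complex.continuous_ofReal.tendsto 1).comp hr
      · filter_upwards with n
        simp only [Set.mem_compl_iff, Set.mem_singleton_iff]
        intro hcontra
        have : (1 + ((n:ℝ)+1)⁻¹ : ℝ) = 1 := by exact_mod_cast hcontra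
        have hpos : (0:ℝ) < ((n:ℝ)+1)⁻¹ := by positivity
        linarith
    exact htend.frequently (Frequently.of_forall fun n => hg0 _ (by positivity))
  have hEq : Set.EqOn g 0 Set.univ := by
    have hA : AnalyticOnNhd ℂ g Set.univ :=
      hdiff.differentiableOn.analyticOnNhd isOpen_univ
    exact hA.eqOn_zero_of_preconnected_of_frequently_eq_zero isPreconnected_univ
      (Set.mem_univ 1) hfreq
  intro t
  have hzero : g ((t:ℂ) * Complex.I) = 0 := hEq (Set.mem_univ _)
  have hI : (Complex.I)^2 = -1 := Complex.I_sq
  have hrw : g ((t:ℂ) * Complex.I)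
      = ((-t^2 * Real.cosh (ℓ₁*t) * Real.cosh (ℓ₂*t) * u
      - t * Real.cosh (ℓ₁*t) * Real.sinh (ℓ₂*t) * v₂
      + t^3 * Real.cosh (ℓ₁*t) * Real.sinh (ℓ₂*t) * w₂
      - t * Real.sinh (ℓ₁*t) * Real.cosh (ℓ₂*t) * v₁
      + t^3 * Real.sinh (ℓ₁*t) * Real.cosh (ℓ₂*t) * w₁
      - Real.sinh (ℓ₁*t) * Real.sinh (ℓ₂*t) * x
      + t^2 * Real.sinh (ℓ₁*t) * Real.sinh (ℓ₂*t) * y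
      - t^4 * Real.sinh (ℓ₁*t) * Real.sinh (ℓ₂*t) * z : ℝ) : ℂ) := by
    simp only [hg,
      show (ℓ₁:ℂ) * ((t:ℂ) * Complex.I) = ((ℓ₁*t : ℝ):ℂ) * Complex.I by push_cast; ring,
      show (ℓ₂:ℂ) * ((t:ℂ) * Complex.I) = ((ℓ₂*t : ℝ):ℂ) * Complex.I by push_cast; ring,
      Complex.cos_mul_I, Complex.sin_mul_I,
      ← Complex.ofReal_cosh, ← Complex.ofReal_sinh]
    push_cast
    linear_combination ((t:ℂ)^2 * Complex.cosh ((ℓ₁:ℂ)*t) * Complex.cosh ((ℓ₂:ℂ)*t) * (u:ℂ)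
      + (t:ℂ) * Complex.cosh ((ℓ₁:ℂ)*t) * Complex.sinh ((ℓ₂:ℂ)*t) * (v₂:ℂ)
      + (t:ℂ)^3 * Complex.cosh ((ℓ₁:ℂ)*t) * Complex.sinh ((ℓ₂:ℂ)*t) * (w₂:ℂ) * (Complex.I^2 - 1)
      + (t:ℂ) * Complex.sinh ((ℓ₁:ℂ)*t) * Complex.cosh ((ℓ₂:ℂ)*t) * (v₁:ℂ)
      + (t:ℂ)^3 * Complex.sinh ((ℓ₁:ℂ)*t) * Complex.cosh ((ℓ₂:ℂ)*t) * (w₁:ℂ) * (Complex.I^2 - 1)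
      + Complex.sinh ((ℓ₁:ℂ)*t) * Complex.sinh ((ℓ₂:ℂ)*t) * (x:ℂ)
      + (t:ℂ)^2 * Complex.sinh ((ℓ₁:ℂ)*t) * Complex.sinh ((ℓ₂:ℂ)*t) * (y:ℂ) * (Complex.I^2 - 1)
      + (t:ℂ)^4 * Complex.sinh ((ℓ₁:ℂ)*t) * Complex.sinh ((ℓ₂:ℂ)*t) * (z:ℂ) * (Complex.I^4 - Complex.I^2 + 1)) * hI
  rw [hrw] at hzero
  exact_mod_cast hzero


lemma ratio_helper (p a q b r c s d : ℝ) (hp : p ≠ 0) (ha : a*a = p*p)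
    (m1 : a*q = b*p) (m2 : a*r = c*p) (m3 : a*s = d*p) :
    (a = p ∧ b = q ∧ c = r ∧ d = s) ∨ (a = -p ∧ b = -q ∧ c = -r ∧ d = -s) := by
  rcases mul_self_eq_mul_self_iff.mp ha with hap | hap
  · left
    subst hap
    exact ⟨rfl, (mul_right_cancel₀ hp (by linear_combination -m1)),
      (mul_right_cancel₀ hp (by linear_combination -m2)),
      (mul_right_cancel₀ hp (by linear_combination -m3))⟩
  · right
    subst hap
    exact ⟨rfl, (mul_right_cancel₀ hp (by linear_combination -m1)),
      (mul_right_cancel₀ hp (by linear_combination -m2)),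
      (mul_right_cancel₀ hp (by linear_combination -m3))⟩

lemma equal_case (a b c d p q r s : ℝ) (h1 : a*d - b*c = 1) (h2 : p*s - q*r = 1)
    (e1 : b*r = c*q) (e4 : a*r = c*p) (e5 : a*s = d*p) (e6 : b*s = d*q) :
    (a = p ∧ b = q ∧ c = r ∧ d = s) ∨ (a = -p ∧ b = -q ∧ c = -r ∧ d = -s) := by
  have hpq : p ≠ 0 ∨ q ≠ 0 := by
    by_contra hc
    push_neg at hc
    obtain ⟨hp0, hq0⟩ := hc
    rw [hp0, hq0] at h2
    nlinarith [h2]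
  have hrs : r ≠ 0 ∨ s ≠ 0 := by
    by_contra hc
    push_neg at hc
    obtain ⟨hr0, hs0⟩ := hc
    rw [hr0, hs0] at h2
    nlinarith [h2]
  have m6 : c*s = d*r := by
    rcases hpq with hp | hq
    · exact mul_left_cancel₀ hp (by linear_combination -s*e4 + r*e5)
    · exact mul_left_cancel₀ hq (by linear_combination -s*e1 + r*e6)
  have m1 : a*q = b*p := by
    rcases hrs with hr | hs
    · exact mul_left_cancel₀ hr (by linear_combination q*e4 - p*e1)
    · exact mul_left_cancel₀ hs (by linear_combination q*e5 - p*e6)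
  have hnz : p ≠ 0 ∨ q ≠ 0 ∨ r ≠ 0 ∨ s ≠ 0 := by
    rcases hpq with hp | hq
    · exact Or.inl hp
    · exact Or.inr (Or.inl hq)
  rcases hnz with hp | hq | hr | hs
  · have key : a*a*(p*s - q*r) = p*p*(a*d - b*c) := by
      linear_combination a*p*e5 - a*q*e4 - c*p*m1
    have ha : a*a = p*p := by linear_combination key - (a*a)*h2 + (p*p)*h1
    exact ratio_helper p a q b r c s d hp ha m1 e4 e5
  · have key : b*b*(p*s - q*r) = q*q*(a*d - b*c) := by
      linear_combination b*p*e6 - d*q*m1 - b*q*e1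
    have hb : b*b = q*q := by linear_combination key - (b*b)*h2 + (q*q)*h1
    rcases ratio_helper q b p a r c s d hq hb m1.symm e1 e6 with ⟨h1', h2', h3', h4'⟩ | ⟨h1', h2', h3', h4'⟩
    · exact Or.inl ⟨h2', h1', h3', h4'⟩
    · exact Or.inr ⟨h2', h1', h3', h4'⟩
  · have key : c*c*(p*s - q*r) = r*r*(a*d - b*c) := by
      linear_combination c*p*m6 - d*r*e4 + c*r*e1
    have hcr : c*c = r*r := by linear_combination key - (c*c)*h2 + (r*r)*h1
    rcases ratio_helper r c p a q b s d hr hcr e4.symm e1.symm m6 with ⟨h1', h2', h3', h4'⟩ | ⟨h1', h2', h3', h4'⟩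
    · exact Or.inl ⟨h2', h3', h1', h4'⟩
    · exact Or.inr ⟨h2', h3', h1', h4'⟩
  · have key : d*d*(p*s - q*r) = s*s*(a*d - b*c) := by
      linear_combination -d*s*e5 + c*s*e6 + d*q*m6
    have hds : d*d = s*s := by linear_combination key - (d*d)*h2 + (s*s)*h1
    rcases ratio_helper s d p a q b r c hs hds e5.symm e6.symm m6.symm with ⟨h1', h2', h3', h4'⟩ | ⟨h1', h2', h3', h4'⟩
    · exact Or.inl ⟨h2', h3', h4', h1'⟩
    · exact Or.inr ⟨h2', h3', h4', h1'⟩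

end Helpers

set_option maxHeartbeats 2000000 in
theorem commutator_vanishing_characterization
    (ℓ₁ ℓ₂ : ℝ) (B₁ B₂ : Matrix (Fin 2) (Fin 2) ℝ)
    (hB₁ : B₁.det = 1) (hB₂ : B₂.det = 1) (h₁ : ℓ₁ > 0) (h₂ : ℓ₂ > 0)
    (h : ∀ w : ℝ, w > 0 →
      transferM (w ^ 2) ℓ₁ B₁ * transferM (w ^ 2) ℓ₂ B₂
        - transferM (w ^ 2) ℓ₂ B₂ * transferM (w ^ 2) ℓ₁ B₁ = 0) :
    (ℓ₁ = ℓ₂ ∧ (B₁ = B₂ ∨ B₁ = -B₂)) ∨ ((B₁ = 1 ∨ B₁ = -1) ∧ (B₂ = 1 ∨ B₂ = -1)) := by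
  obtain ⟨a, b, c, d, hB1⟩ : ∃ a b c d, B₁ = !![a,b;c,d] :=
    ⟨_, _, _, _, Matrix.eta_fin_two B₁⟩
  obtain ⟨p, q, r, s, hB2⟩ : ∃ p q r s, B₂ = !![p,q;r,s] :=
    ⟨_, _, _, _, Matrix.eta_fin_two B₂⟩
  subst hB1
  subst hB2
  rw [Matrix.det_fin_two_of] at hB₁ hB₂
  have e00 : ∀ w : ℝ, 0 < w →
      w^2 * Real.cos (ℓ₁*w) * Real.cos (ℓ₂*w) * (b*r - c*q)
      + w * Real.cos (ℓ₁*w) * Real.sin (ℓ₂*w) * (-(c*p))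
      + w^3 * Real.cos (ℓ₁*w) * Real.sin (ℓ₂*w) * (-(b*s))
      + w * Real.sin (ℓ₁*w) * Real.cos (ℓ₂*w) * (a*r)
      + w^3 * Real.sin (ℓ₁*w) * Real.cos (ℓ₂*w) * (d*q)
      + Real.sin (ℓ₁*w) * Real.sin (ℓ₂*w) * ((0:ℝ))
      + w^2 * Real.sin (ℓ₁*w) * Real.sin (ℓ₂*w) * (-(a*s) + d*p)
      + w^4 * Real.sin (ℓ₁*w) * Real.sin (ℓ₂*w) * ((0:ℝ))
      = 0 := by
    intro w hw
    have hij := congrFun (congrFun (h w hw) 0) 0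
    have hsq : Real.sqrt (w^2) = w := Real.sqrt_sq hw.le
    rw [mul_comm ℓ₁ w, mul_comm ℓ₂ w]
    simp only [transferM, freeMonodromy, hsq, Matrix.mul_apply, Fin.sum_univ_two,
      Matrix.sub_apply, Matrix.zero_apply, Matrix.cons_val', Matrix.cons_val_zero,
      Matrix.cons_val_one, Matrix.head_cons, Matrix.head_fin_const, Matrix.empty_val',
      Matrix.cons_val_fin_one, Matrix.of_apply] at hij
    field_simp at hij
    linear_combination w * hij
  have e01 : ∀ w : ℝ, 0 < w →
      w^2 * Real.cos (ℓ₁*w) * Real.cos (ℓ₂*w) * (a*q - b*p + b*s - d*q)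
      + w * Real.cos (ℓ₁*w) * Real.sin (ℓ₂*w) * (a*p + b*r - d*p)
      + w^3 * Real.cos (ℓ₁*w) * Real.sin (ℓ₂*w) * (b*q)
      + w * Real.sin (ℓ₁*w) * Real.cos (ℓ₂*w) * (-(a*p) + a*s - c*q)
      + w^3 * Real.sin (ℓ₁*w) * Real.cos (ℓ₂*w) * (-(b*q))
      + Real.sin (ℓ₁*w) * Real.sin (ℓ₂*w) * (a*r - c*p)
      + w^2 * Real.sin (ℓ₁*w) * Real.sin (ℓ₂*w) * (a*q - b*p)
      + w^4 * Real.sin (ℓ₁*w) * Real.sin (ℓ₂*w) * ((0:ℝ))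
      = 0 := by
    intro w hw
    have hij := congrFun (congrFun (h w hw) 0) 1
    have hsq : Real.sqrt (w^2) = w := Real.sqrt_sq hw.le
    simp only [transferM, freeMonodromy, hsq, Matrix.mul_apply, Fin.sum_univ_two,
      Matrix.sub_apply, Matrix.zero_apply, Matrix.cons_val', Matrix.cons_val_zero,
      Matrix.cons_val_one, Matrix.head_cons, Matrix.head_fin_const, Matrix.empty_val',
      Matrix.cons_val_fin_one, Matrix.of_apply] at hij
    field_simp at hij
    have hkey : w * (w^2 * Real.cos (ℓ₁*w) * Real.cos (ℓ₂*w) * (a*q - b*p + b*s - d*q)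
      + w * Real.cos (ℓ₁*w) * Real.sin (ℓ₂*w) * (a*p + b*r - d*p)
      + w^3 * Real.cos (ℓ₁*w) * Real.sin (ℓ₂*w) * (b*q)
      + w * Real.sin (ℓ₁*w) * Real.cos (ℓ₂*w) * (-(a*p) + a*s - c*q)
      + w^3 * Real.sin (ℓ₁*w) * Real.cos (ℓ₂*w) * (-(b*q))
      + Real.sin (ℓ₁*w) * Real.sin (ℓ₂*w) * (a*r - c*p)
      + w^2 * Real.sin (ℓ₁*w) * Real.sin (ℓ₂*w) * (a*q - b*p)
      + w^4 * Real.sin (ℓ₁*w) * Real.sin (ℓ₂*w) * ((0:ℝ))) = 0 := by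
      rw [mul_comm ℓ₁ w, mul_comm ℓ₂ w]
      linear_combination w * hij
    exact (mul_eq_zero.mp hkey).resolve_left hw.ne'
  have e10 : ∀ w : ℝ, 0 < w →
      w^2 * Real.cos (ℓ₁*w) * Real.cos (ℓ₂*w) * (-(a*r) + c*p - c*s + d*r)
      + w * Real.cos (ℓ₁*w) * Real.sin (ℓ₂*w) * (-(c*r))
      + w^3 * Real.cos (ℓ₁*w) * Real.sin (ℓ₂*w) * (a*s - c*q - d*s)
      + w * Real.sin (ℓ₁*w) * Real.cos (ℓ₂*w) * (c*r)
      + w^3 * Real.sin (ℓ₁*w) * Real.cos (ℓ₂*w) * (b*r - d*p + d*s)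
      + Real.sin (ℓ₁*w) * Real.sin (ℓ₂*w) * ((0:ℝ))
      + w^2 * Real.sin (ℓ₁*w) * Real.sin (ℓ₂*w) * (-(c*s) + d*r)
      + w^4 * Real.sin (ℓ₁*w) * Real.sin (ℓ₂*w) * (-(b*s) + d*q)
      = 0 := by
    intro w hw
    have hij := congrFun (congrFun (h w hw) 1) 0
    have hsq : Real.sqrt (w^2) = w := Real.sqrt_sq hw.le
    rw [mul_comm ℓ₁ w, mul_comm ℓ₂ w]
    simp only [transferM, freeMonodromy, hsq, Matrix.mul_apply, Fin.sum_univ_two,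
      Matrix.sub_apply, Matrix.zero_apply, Matrix.cons_val', Matrix.cons_val_zero,
      Matrix.cons_val_one, Matrix.head_cons, Matrix.head_fin_const, Matrix.empty_val',
      Matrix.cons_val_fin_one, Matrix.of_apply] at hij
    field_simp at hij
    linear_combination w * hij
  obtain ⟨hx00, hv00, hy00, hw00, hz00, hres00⟩ :=
    scalar_master ℓ₁ ℓ₂ (b*r - c*q) (a*r) (-(c*p)) (d*q) (-(b*s))
      ((0:ℝ)) (-(a*s) + d*p) ((0:ℝ)) h₁ h₂
      (analytic_transfer ℓ₁ ℓ₂ (b*r - c*q) (a*r) (-(c*p)) (d*q) (-(b*s))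
        ((0:ℝ)) (-(a*s) + d*p) ((0:ℝ)) e00)
  obtain ⟨hx01, hv01, hy01, hw01, hz01, hres01⟩ :=
    scalar_master ℓ₁ ℓ₂ (a*q - b*p + b*s - d*q) (-(a*p) + a*s - c*q) (a*p + b*r - d*p) (-(b*q)) (b*q)
      (a*r - c*p) (a*q - b*p) ((0:ℝ)) h₁ h₂
      (analytic_transfer ℓ₁ ℓ₂ (a*q - b*p + b*s - d*q) (-(a*p) + a*s - c*q) (a*p + b*r - d*p) (-(b*q)) (b*q)
        (a*r - c*p) (a*q - b*p) ((0:ℝ)) e01)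
  obtain ⟨hx10, hv10, hy10, hw10, hz10, hres10⟩ :=
    scalar_master ℓ₁ ℓ₂ (-(a*r) + c*p - c*s + d*r) (c*r) (-(c*r)) (b*r - d*p + d*s) (a*s - c*q - d*s)
      ((0:ℝ)) (-(c*s) + d*r) (-(b*s) + d*q) h₁ h₂
      (analytic_transfer ℓ₁ ℓ₂ (-(a*r) + c*p - c*s + d*r) (c*r) (-(c*r)) (b*r - d*p + d*s) (a*s - c*q - d*s)
        ((0:ℝ)) (-(c*s) + d*r) (-(b*s) + d*q) e10)
  by_cases hll : ℓ₁ = ℓ₂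
  · -- equal lengths: B₁ = ±B₂
    left
    refine ⟨hll, ?_⟩
    have hU00 : b*r - c*q = 0 := by
      have := hres00 1
      rw [hll, sub_self] at this
      norm_num at this
      linarith
    have e1 : b*r = c*q := by linarith
    have e4 : a*r = c*p := by linarith [hx01]
    have e5 : a*s = d*p := by
      have : -(a*s) + d*p = 0 := by rw [hy00]; exact hU00
      linarith
    have e6 : b*s = d*q := by linarith [hz10]
    rcases equal_case a b c d p q r s hB₁ hB₂ e1 e4 e5 e6 with
      ⟨ha, hb, hc, hd⟩ | ⟨ha, hb, hc, hd⟩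
    · left
      rw [ha, hb, hc, hd]
    · right
      rw [ha, hb, hc, hd]
      ext i j
      fin_cases i <;> fin_cases j <;> simp
  · -- distinct lengths: both scalar
    right
    have hβ : ℓ₁ - ℓ₂ ≠ 0 := sub_ne_zero.mpr hll
    obtain ⟨hu00, hv200, hw200⟩ := stage2 _ _ _ _ hβ hres00
    obtain ⟨hu01, hv201, hw201⟩ := stage2 _ _ _ _ hβ hres01
    obtain ⟨hu10, hv210, hw210⟩ := stage2 _ _ _ _ hβ hres10
    -- scalar facts
    have hcp : c*p = 0 := by linarith [hv200]
    have hcr : c*r = 0 := by linarith [hv210]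
    have hbs : b*s = 0 := by linarith [hw200]
    have hbq : b*q = 0 := by linarith [hw201]
    have hc0 : c = 0 := by
      rcases mul_eq_zero.mp hcp with h' | hp0
      · exact h'
      · rcases mul_eq_zero.mp hcr with h' | hr0
        · exact h'
        · exfalso; rw [hp0, hr0] at hB₂; nlinarith [hB₂]
    have hb0 : b = 0 := by
      rcases mul_eq_zero.mp hbq with h' | hq0
      · exact h'
      · rcases mul_eq_zero.mp hbs with h' | hs0
        · exact h'
        · exfalso; rw [hq0, hs0] at hB₂; nlinarith [hB₂]
    have had : a = d := by
      have hqad : q*(a-d) = 0 := by rw [hb0] at hu01; linarith [hu01]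
      have hrad : r*(a-d) = 0 := by rw [hc0] at hu10; linarith [hu10]
      have hpad : p*(a-d) = 0 := by rw [hb0] at hv201; linarith [hv201]
      have hsad : s*(a-d) = 0 := by rw [hc0] at hw210; linarith [hw210]
      by_contra hne
      have had' : a - d ≠ 0 := sub_ne_zero.mpr hne
      have hp0 : p = 0 := by rcases mul_eq_zero.mp hpad with h'|h'; exact h'; exact absurd h' had'
      have hq0 : q = 0 := by rcases mul_eq_zero.mp hqad with h'|h'; exact h'; exact absurd h' had'
      have hr0 : r = 0 := by rcases mul_eq_zero.mp hrad with h'|h'; exact h'; exact absurd h' had'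
      have hs0 : s = 0 := by rcases mul_eq_zero.mp hsad with h'|h'; exact h'; exact absurd h' had'
      rw [hp0, hq0, hr0, hs0] at hB₂
      nlinarith [hB₂]
    have haa : a * a = 1 := by
      rw [hb0, hc0, ← had] at hB₁
      linarith [hB₁]
    have ha0 : a ≠ 0 := by
      intro h'
      rw [h'] at haa
      norm_num at haa
    have hr0 : r = 0 := by
      have : a * r + -(c*p) = 0 := hv00
      rw [hc0] at this
      have har : a * r = 0 := by linarith
      rcases mul_eq_zero.mp har with h' | h'
      · exact absurd h' ha0
      · exact h'
    have hq0 : q = 0 := by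
      have : d * q + -(b*s) = 0 := hw00
      rw [hb0] at this
      have hdq : d * q = 0 := by linarith
      rcases mul_eq_zero.mp hdq with h' | h'
      · exact absurd h' (had ▸ ha0)
      · exact h'
    have hps : p = s := by
      have hy0 : -(a*s) + d*p = 0 := by rw [hy00]; exact hu00
      rw [← had] at hy0
      have : a * (p - s) = 0 := by linarith
      rcases mul_eq_zero.mp this with h' | h'
      · exact absurd h' ha0
      · linarith
    have hpp : p * p = 1 := by
      rw [hq0, hr0, ← hps] at hB₂
      linarith [hB₂]
    constructor
    · rcases mul_self_eq_one_iff.mp haa with ha1 | ha1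
      · left
        rw [Matrix.one_fin_two, hb0, hc0, ← had, ha1]
      · right
        rw [hb0, hc0, ← had, ha1]
        ext i j
        fin_cases i <;> fin_cases j <;> simp [Matrix.one_fin_two]
    · rcases mul_self_eq_one_iff.mp hpp with hp1 | hp1
      · left
        rw [Matrix.one_fin_two, hq0, hr0, ← hps, hp1]
      · right
        rw [hq0, hr0, ← hps, hp1]
        ext i j
        fin_cases i <;> fin_cases j <;> simp [Matrix.one_fin_two]
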